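/- arXiv:1808.09855 — 6 statements merged into one kernel-verified Lean document; each statement's English description precedes it below -/
import Mathlib

section
/- Legendre dual representation of the limit shape: for (θ,χ) in the curved part, the limiting height function 𝔥(θ,χ) = θ𝔴° − ∫₀^χ ξ(u)𝔴°/(ξ(u)−𝔴°)² du, where 𝔴° = 𝔴°(θ,χ) is the critical point, equals the maximum over v ∈ [0, W°) of the function v ↦ θv − ∫₀^χ v·ξ(u)/(ξ(u)−v)² du. -/
open MeasureTheory

/-- Pointwise convexity gap identity for `v ↦ v·x/(x−v)²`. -/
lemma legendre_ptwise_eq (x v w : ℝ) (hvx : v ≠ x) (hwx : w ≠ x) :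
    (w - v) * (x * (x + w) / (x - w) ^ 3) - x * w / (x - w) ^ 2 + v * x / (x - v) ^ 2
      = x * (v - w) ^ 2 * (2 * x ^ 2 - v * x - v * w) / ((x - v) ^ 2 * (x - w) ^ 3) := by
  have h1 : x - v ≠ 0 := by intro h; apply hvx; linarith
  have h2 : x - w ≠ 0 := by intro h; apply hwx; linarith
  field_simp
  ring

lemma legendre_ptwise_nonneg (x v w : ℝ) (hx : 0 < x) (hv : 0 ≤ v) (hvx : v < x)
    (hw : 0 < w) (hwx : w < x) :
    0 ≤ (w - v) * (x * (x + w) / (x - w) ^ 3) - x * w / (x - w) ^ 2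
        + v * x / (x - v) ^ 2 := by
  rw [legendre_ptwise_eq x v w hvx.ne hwx.ne]
  have hnum : 0 ≤ x * (v - w) ^ 2 * (2 * x ^ 2 - v * x - v * w) := by
    have : 0 ≤ 2 * x ^ 2 - v * x - v * w := by nlinarith
    positivity
  have hden : 0 < (x - v) ^ 2 * (x - w) ^ 3 := by
    have h1 : 0 < x - v := by linarith
    have h2 : 0 < x - w := by linarith
    positivity
  positivity

lemma legendre_ptwise_pos (x v w : ℝ) (hx : 0 < x) (hv : 0 ≤ v) (hvx : v < x)
    (hw : 0 < w) (hwx : w < x) (hne : v ≠ w) :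
    0 < (w - v) * (x * (x + w) / (x - w) ^ 3) - x * w / (x - w) ^ 2
        + v * x / (x - v) ^ 2 := by
  rw [legendre_ptwise_eq x v w hvx.ne hwx.ne]
  have hnum : 0 < x * (v - w) ^ 2 * (2 * x ^ 2 - v * x - v * w) := by
    have h1 : 0 < 2 * x ^ 2 - v * x - v * w := by nlinarith
    have h2 : 0 < (v - w) ^ 2 := sq_pos_of_ne_zero (sub_ne_zero.mpr hne)
    exact mul_pos (mul_pos hx h2) h1
  have hden : 0 < (x - v) ^ 2 * (x - w) ^ 3 := by
    have h1 : 0 < x - v := by linarith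
    have h2 : 0 < x - w := by linarith
    positivity
  exact div_pos hnum hden

/-- Legendre dual representation of the limit shape: for `(θ,χ)` in the curved part,
`𝔥(θ,χ) = θ𝔴° − ∫₀^χ ξ(u)𝔴°/(ξ(u)−𝔴°)² du`, where `𝔴°` is the critical point, equals
the maximum over `v ∈ [0, W°)` of `v ↦ θv − ∫₀^χ v·ξ(u)/(ξ(u)−v)² du`, and the
maximum is attained uniquely at `v = 𝔴°`. -/
theorem legendre_dual_limit_shape
    (χ m M θ W 𝔴 𝔥 : ℝ) (hχ : 0 < χ) (hm : 0 < m)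
    (ξ : ℝ → ℝ) (hmeas : Measurable ξ)
    (hlb : ∀ u, m ≤ ξ u) (hub : ∀ u, ξ u ≤ M)
    (hW : W = essInf ξ (volume.restrict (Set.Ioo 0 χ)))
    (hcurved : (∫ u in (0:ℝ)..χ, 1 / ξ u) < θ)
    (h𝔴mem : 𝔴 ∈ Set.Ioo 0 W)
    (hcrit : (∫ u in (0:ℝ)..χ, ξ u * (ξ u + 𝔴) / (ξ u - 𝔴) ^ 3) = θ)
    (h𝔥 : 𝔥 = θ * 𝔴 - ∫ u in (0:ℝ)..χ, ξ u * 𝔴 / (ξ u - 𝔴) ^ 2) :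
    (∀ v ∈ Set.Ico (0:ℝ) W,
      θ * v - (∫ u in (0:ℝ)..χ, v * ξ u / (ξ u - v) ^ 2) ≤ 𝔥) ∧
    (∀ v ∈ Set.Ico (0:ℝ) W,
      θ * v - (∫ u in (0:ℝ)..χ, v * ξ u / (ξ u - v) ^ 2) = 𝔥 → v = 𝔴) := by
  obtain ⟨h𝔴0, h𝔴W⟩ := h𝔴mem
  set μ : Measure ℝ := volume.restrict (Set.Ioc 0 χ) with hμ
  -- the restriction to Ioo and Ioc agree
  have hrestr : volume.restrict (Set.Ioo 0 χ) = μ := by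
    rw [hμ]
    exact Measure.restrict_congr_set Ioo_ae_eq_Ioc
  -- a.e. lower bound by W
  have hWae : ∀ᵐ u ∂μ, W ≤ ξ u := by
    rw [← hrestr, hW]
    exact ae_essInf_le (Filter.isBoundedUnder_of ⟨m, fun u => hlb u⟩)
  have hμfin : IsFiniteMeasure μ := by
    constructor
    rw [hμ, Measure.restrict_apply_univ, Real.volume_Ioc]
    exact ENNReal.ofReal_lt_top
  have hμne : μ ≠ 0 := by
    intro h
    have := congrArg (fun ν : Measure ℝ => ν Set.univ) h
    simp only [hμ, Measure.restrict_apply_univ, Real.volume_Ioc, Measure.coe_zero,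
      Pi.zero_apply] at this
    rw [ENNReal.ofReal_eq_zero] at this
    linarith
  have hμae : (ae μ).NeBot := ae_neBot.mpr hμne
  -- interval integrals as set integrals
  have hII : ∀ f : ℝ → ℝ, (∫ u in (0:ℝ)..χ, f u) = ∫ u, f u ∂μ := fun f =>
    intervalIntegral.integral_of_le hχ.le
  -- basic positivity
  have hWpos : 0 < W := lt_trans h𝔴0 h𝔴W
  -- integrability helper
  have hint : ∀ (f : ℝ → ℝ) (C : ℝ), Measurable f → (∀ᵐ u ∂μ, ‖f u‖ ≤ C) →
      Integrable f μ := fun f C hf hb =>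
    ⟨hf.aestronglyMeasurable, HasFiniteIntegral.of_bounded hb⟩
  have hMm : m ≤ M := le_trans (hlb 0) (hub 0)
  have hMpos : 0 < M := lt_of_lt_of_le hm hMm
  -- the functions
  set B : ℝ → ℝ := fun u => ξ u * (ξ u + 𝔴) / (ξ u - 𝔴) ^ 3 with hB
  set D : ℝ → ℝ := fun u => ξ u * 𝔴 / (ξ u - 𝔴) ^ 2 with hD
  have hBint : Integrable B μ := by
    apply hint B (M * (M + 𝔴) / (W - 𝔴) ^ 3) (by fun_prop)
    filter_upwards [hWae] with u hu
    have hx𝔴 : 𝔴 < ξ u := lt_of_lt_of_le h𝔴W hu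
    have h1 : 0 < ξ u - 𝔴 := by linarith
    have h2 : 0 < W - 𝔴 := by linarith
    rw [Real.norm_eq_abs,
      abs_of_nonneg (div_nonneg (by nlinarith [hlb u]) (pow_pos h1 3).le)]
    apply div_le_div₀ (by positivity)
      (by nlinarith [hub u, hlb u])
      (by positivity)
      (by have := hub u; gcongr <;> linarith)
  have hDint : Integrable D μ := by
    apply hint D (M * 𝔴 / (W - 𝔴) ^ 2) (by fun_prop)
    filter_upwards [hWae] with u hu
    have hx𝔴 : 𝔴 < ξ u := lt_of_lt_of_le h𝔴W hu
    have h1 : 0 < ξ u - 𝔴 := by linarith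
    have h2 : 0 < W - 𝔴 := by linarith
    rw [Real.norm_eq_abs,
      abs_of_nonneg (div_nonneg (by nlinarith [hlb u]) (pow_pos h1 2).le)]
    apply div_le_div₀ (by positivity)
      (by nlinarith [hub u, hlb u])
      (by positivity)
      (by have := hub u; gcongr <;> linarith)
  -- critical point identity as set integral
  have hcrit' : (∫ u, B u ∂μ) = θ := by rw [← hII B]; exact hcrit
  -- main claim, for each v
  have main : ∀ v ∈ Set.Ico (0:ℝ) W,
      (θ * v - (∫ u in (0:ℝ)..χ, v * ξ u / (ξ u - v) ^ 2) ≤ 𝔥) ∧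
      (θ * v - (∫ u in (0:ℝ)..χ, v * ξ u / (ξ u - v) ^ 2) = 𝔥 → v = 𝔴) := by
    rintro v ⟨hv0, hvW⟩
    set A : ℝ → ℝ := fun u => v * ξ u / (ξ u - v) ^ 2 with hA
    have hAint : Integrable A μ := by
      apply hint A (W * M / (W - v) ^ 2) (by fun_prop)
      filter_upwards [hWae] with u hu
      have hxv : v < ξ u := lt_of_lt_of_le hvW hu
      have h1 : 0 < ξ u - v := by linarith
      have h2 : 0 < W - v := by linarith
      rw [Real.norm_eq_abs,
        abs_of_nonneg (div_nonneg (mul_nonneg hv0 (by nlinarith [hlb u])) (pow_pos h1 2).le)]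
      apply div_le_div₀ (by positivity)
        (by nlinarith [hub u])
        (by positivity)
        (by have := hub u; gcongr <;> linarith)
    set g : ℝ → ℝ := fun u => ((𝔴 - v) * B u - D u) + A u with hg
    have hgint : Integrable g μ := (((hBint.const_mul _).sub hDint).add hAint)
    have hgval : (∫ u, g u ∂μ) = (𝔴 - v) * θ - (∫ u, D u ∂μ) + ∫ u, A u ∂μ := by
      have hi1 : Integrable (fun u => (𝔴 - v) * B u) μ := hBint.const_mul _
      have hi2 : Integrable (fun u => (𝔴 - v) * B u - D u) μ := hi1.sub hDint
      have e1 : (∫ u, g u ∂μ) = (∫ u, ((𝔴 - v) * B u - D u) ∂μ) + ∫ u, A u ∂μ :=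
        integral_add hi2 hAint
      have e2 : (∫ u, ((𝔴 - v) * B u - D u) ∂μ) = (∫ u, (𝔴 - v) * B u ∂μ) - ∫ u, D u ∂μ :=
        integral_sub hi1 hDint
      rw [e1, e2, integral_const_mul, hcrit']
    have hgnonneg : ∀ᵐ u ∂μ, 0 ≤ g u := by
      filter_upwards [hWae] with u hu
      have hxv : v < ξ u := lt_of_lt_of_le hvW hu
      have hx𝔴 : 𝔴 < ξ u := lt_of_lt_of_le h𝔴W hu
      have hx : 0 < ξ u := lt_of_le_of_lt hv0 hxv
      exact legendre_ptwise_nonneg (ξ u) v 𝔴 hx hv0 hxv h𝔴0 hx𝔴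
    have key : θ * v - (∫ u in (0:ℝ)..χ, v * ξ u / (ξ u - v) ^ 2) = 𝔥 - ∫ u, g u ∂μ := by
      rw [h𝔥, hII (fun u => v * ξ u / (ξ u - v) ^ 2), hII (fun u => ξ u * 𝔴 / (ξ u - 𝔴) ^ 2),
        hgval]
      show θ * v - ∫ u, A u ∂μ = θ * 𝔴 - (∫ u, D u ∂μ) -
        ((𝔴 - v) * θ - (∫ u, D u ∂μ) + ∫ u, A u ∂μ)
      ring
    constructor
    · rw [key]
      have : 0 ≤ ∫ u, g u ∂μ := integral_nonneg_of_ae hgnonneg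
      linarith
    · intro heq
      rw [key] at heq
      have hzero : (∫ u, g u ∂μ) = 0 := by linarith
      by_contra hne
      have hgpos : ∀ᵐ u ∂μ, 0 < g u := by
        filter_upwards [hWae] with u hu
        have hxv : v < ξ u := lt_of_lt_of_le hvW hu
        have hx𝔴 : 𝔴 < ξ u := lt_of_lt_of_le h𝔴W hu
        have hx : 0 < ξ u := lt_of_le_of_lt hv0 hxv
        exact legendre_ptwise_pos (ξ u) v 𝔴 hx hv0 hxv h𝔴0 hx𝔴 hne
      have hg0 : g =ᵐ[μ] 0 :=
        (integral_eq_zero_iff_of_nonneg_ae hgnonneg hgint).mp hzero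
      obtain ⟨u, hu1, hu2⟩ := (hg0.and hgpos).exists
      rw [hu1] at hu2
      exact lt_irrefl 0 hu2
  exact ⟨fun v hv => (main v hv).1, fun v hv => (main v hv).2⟩
end

section
/- Outside the curved part the Legendre dual is nonpositive: if θ ≤ ∫₀^χ du/ξ(u), then for all v ∈ [0, W°), θv − ∫₀^χ v·ξ(u)/(ξ(u)−v)² du ≤ 0. -/
open MeasureTheory

/-- Outside the curved part the Legendre dual is nonpositive: if
`θ ≤ ∫₀^χ du/ξ(u)`, then for all `v ∈ [0, W°)`,
`θv − ∫₀^χ v·ξ(u)/(ξ(u)−v)² du ≤ 0`. -/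
theorem legendre_dual_nonpositive_outside_curved_part
    (χ m M θ : ℝ) (hχ : 0 < χ) (hm : 0 < m)
    (ξ : ℝ → ℝ) (hmeas : Measurable ξ)
    (hlb : ∀ u, m ≤ ξ u) (hub : ∀ u, ξ u ≤ M)
    (hθ : θ ≤ ∫ u in (0:ℝ)..χ, 1 / ξ u) :
    ∀ v ∈ Set.Ico (0:ℝ) (essInf ξ (volume.restrict (Set.Ioo 0 χ))),
      θ * v - (∫ u in (0:ℝ)..χ, v * ξ u / (ξ u - v) ^ 2) ≤ 0 := by
  intro v hv
  obtain ⟨hv0, hvW⟩ := hv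
  set W := essInf ξ (volume.restrict (Set.Ioo 0 χ)) with hW
  have hbdd : Filter.IsBoundedUnder (· ≥ ·) (ae (volume.restrict (Set.Ioo 0 χ))) ξ :=
    Filter.isBoundedUnder_of ⟨m, fun u => hlb u⟩
  have haeW : ∀ᵐ u ∂(volume.restrict (Set.Ioo 0 χ)), W ≤ ξ u := ae_essInf_le hbdd
  -- a.e. on the closed interval
  have hIcc : (volume.restrict (Set.Icc (0:ℝ) χ)) = volume.restrict (Set.Ioo 0 χ) := by
    exact (Measure.restrict_congr_set Ioo_ae_eq_Icc).symm
  have haeW' : ∀ᵐ u ∂(volume.restrict (Set.Icc (0:ℝ) χ)), W ≤ ξ u := by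
    rw [hIcc]; exact haeW
  have hWv : 0 < W - v := sub_pos.mpr hvW
  -- pointwise facts under `W ≤ ξ u`
  have key : ∀ u, W ≤ ξ u → v / ξ u ≤ v * ξ u / (ξ u - v) ^ 2 ∧
      |v * ξ u / (ξ u - v) ^ 2| ≤ v * M / (W - v) ^ 2 := by
    intro u hu
    have hx : 0 < ξ u := lt_of_lt_of_le hm (hlb u)
    have hxv : 0 < ξ u - v := lt_of_lt_of_le hWv (by linarith)
    constructor
    · rw [div_le_div_iff₀ hx (by positivity)]
      have h1 : (ξ u - v) ^ 2 ≤ (ξ u) ^ 2 := by nlinarith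
      nlinarith
    · rw [abs_of_nonneg (by positivity)]
      apply div_le_div₀ (by nlinarith [hm.le.trans (hlb 0), hlb u, hub u])
        (by nlinarith [hub u]) (by positivity)
      nlinarith
  -- integrability
  have hmeasf : Measurable fun u => v * ξ u / (ξ u - v) ^ 2 := by
    exact ((measurable_const.mul hmeas).div ((hmeas.sub measurable_const).pow measurable_const))
  have hint : IntervalIntegrable (fun u => v * ξ u / (ξ u - v) ^ 2) volume 0 χ := by
    rw [intervalIntegrable_iff_integrableOn_Icc_of_le hχ.le]
    refine Integrable.mono' (integrable_const (v * M / (W - v) ^ 2))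
      hmeasf.aestronglyMeasurable ?_
    filter_upwards [haeW'] with u hu
    exact (key u hu).2
  have hint1 : IntervalIntegrable (fun u => 1 / ξ u) volume 0 χ := by
    rw [intervalIntegrable_iff_integrableOn_Icc_of_le hχ.le]
    refine Integrable.mono' (integrable_const (1 / m))
      (measurable_const.div hmeas).aestronglyMeasurable ?_
    refine Filter.Eventually.of_forall fun u => ?_
    have hx : 0 < ξ u := lt_of_lt_of_le hm (hlb u)
    rw [Real.norm_eq_abs, abs_of_nonneg (by positivity)]
    exact one_div_le_one_div_of_le hm (hlb u)
  have hintv : IntervalIntegrable (fun u => v / ξ u) volume 0 χ := by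
    have := hint1.const_mul v
    simpa [mul_one_div, div_eq_mul_inv] using this
  -- main chain
  have step1 : θ * v ≤ (∫ u in (0:ℝ)..χ, 1 / ξ u) * v :=
    mul_le_mul_of_nonneg_right hθ hv0
  have step2 : (∫ u in (0:ℝ)..χ, 1 / ξ u) * v = ∫ u in (0:ℝ)..χ, v / ξ u := by
    simp_rw [div_eq_mul_inv, one_mul]
    rw [mul_comm, intervalIntegral.integral_const_mul]
  have step3 : (∫ u in (0:ℝ)..χ, v / ξ u) ≤ ∫ u in (0:ℝ)..χ, v * ξ u / (ξ u - v) ^ 2 := by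
    apply intervalIntegral.integral_mono_ae_restrict hχ.le hintv hint
    rw [hIcc]
    filter_upwards [haeW] with u hu
    exact (key u hu).1
  linarith
end

section
/- Steep ascent on the circle (pointwise form): fix 𝔴 > 0 and γ ≥ 0, and define S(z) = (𝔴+γ)·( 1/(𝔴+γ−z) − z(2𝔴+γ)/γ³ + 2𝔴² log z / γ³ ) for γ > 0. Then for 0 < φ < π, the derivative d/dφ Re S(𝔴 e^{iφ}) equals 16𝔴²(γ+𝔴)²(γ+2𝔴) sin³(φ/2) cos(φ/2) (γ² + 𝔴²(1−cos φ) + γ𝔴(1−cos φ)) / (γ³(γ²+2𝔴²+2γ𝔴−2𝔴(γ+𝔴)cos φ)²), which is strictly positive. -/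
/-- Steep ascent on the circle (pointwise form): for `𝔴, γ > 0` and
`S(z) = (𝔴+γ)(1/(𝔴+γ−z) − z(2𝔴+γ)/γ³ + 2𝔴² log z/γ³)`, the derivative in `φ` of
`Re S(𝔴 e^{iφ})` for `0 < φ < π` is given by the stated closed form, which is
strictly positive. -/
theorem steep_ascent_circle_derivative
    (𝔴 γ : ℝ) (h𝔴 : 0 < 𝔴) (hγ : 0 < γ)
    (φ : ℝ) (hφ0 : 0 < φ) (hφπ : φ < Real.pi)
    (D : ℝ)
    (hD : D = 16 * 𝔴 ^ 2 * (γ + 𝔴) ^ 2 * (γ + 2 * 𝔴)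
        * Real.sin (φ / 2) ^ 3 * Real.cos (φ / 2)
        * (γ ^ 2 + 𝔴 ^ 2 * (1 - Real.cos φ) + γ * 𝔴 * (1 - Real.cos φ))
        / (γ ^ 3
            * (γ ^ 2 + 2 * 𝔴 ^ 2 + 2 * γ * 𝔴 - 2 * 𝔴 * (γ + 𝔴) * Real.cos φ) ^ 2)) :
    HasDerivAt
      (fun t : ℝ =>
        (((𝔴 : ℂ) + (γ : ℂ)) *
          (((𝔴 : ℂ) + (γ : ℂ) - (𝔴 : ℂ) * Complex.exp (Complex.I * (t : ℂ)))⁻¹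
            - (𝔴 : ℂ) * Complex.exp (Complex.I * (t : ℂ)) * (2 * (𝔴 : ℂ) + (γ : ℂ)) / (γ : ℂ) ^ 3
            + 2 * (𝔴 : ℂ) ^ 2 * Complex.log ((𝔴 : ℂ) * Complex.exp (Complex.I * (t : ℂ))) / (γ : ℂ) ^ 3)).re)
      D φ ∧ 0 < D := by
  constructor
  · -- Step 1: the real part equals an explicit real-valued function.
    have funeq : ∀ t : ℝ,
        (((𝔴 : ℂ) + (γ : ℂ)) *
          (((𝔴 : ℂ) + (γ : ℂ) - (𝔴 : ℂ) * Complex.exp (Complex.I * (t : ℂ)))⁻¹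
            - (𝔴 : ℂ) * Complex.exp (Complex.I * (t : ℂ)) * (2 * (𝔴 : ℂ) + (γ : ℂ)) / (γ : ℂ) ^ 3
            + 2 * (𝔴 : ℂ) ^ 2 * Complex.log ((𝔴 : ℂ) * Complex.exp (Complex.I * (t : ℂ))) / (γ : ℂ) ^ 3)).re
        = (𝔴+γ) * (((𝔴+γ) - 𝔴*Real.cos t)/((𝔴+γ)^2 + 𝔴^2 - 2*(𝔴+γ)*𝔴*Real.cos t)
            - 𝔴*Real.cos t*(2*𝔴+γ)/γ^3 + 2*𝔴^2*Real.log 𝔴/γ^3) := by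
      intro t
      have hlog : (Complex.log ((𝔴 : ℂ) * Complex.exp (Complex.I * (t : ℂ)))).re = Real.log 𝔴 := by
        rw [Complex.log_re]
        simp [Complex.norm_exp, abs_of_pos h𝔴]
      have hnorm : Complex.normSq ((𝔴 : ℂ) + (γ : ℂ) - (𝔴 : ℂ) * Complex.exp (Complex.I * (t : ℂ)))
          = (𝔴+γ)^2 + 𝔴^2 - 2*(𝔴+γ)*𝔴*Real.cos t := by
        rw [mul_comm Complex.I, Complex.exp_mul_I, ← Complex.ofReal_cos, ← Complex.ofReal_sin]
        simp only [Complex.normSq_apply, Complex.add_re, Complex.sub_re, Complex.add_im,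
          Complex.sub_im, Complex.mul_re, Complex.mul_im, Complex.ofReal_re, Complex.ofReal_im,
          Complex.I_re, Complex.I_im]
        linear_combination 𝔴^2 * (Real.sin_sq_add_cos_sq t)
      have hQ' : (0:ℝ) ≤ 2*(𝔴+γ)*𝔴*(1-Real.cos t) :=
        mul_nonneg (by positivity) (by linarith [Real.cos_le_one t])
      have hQ : (𝔴+γ)^2 + 𝔴^2 - 2*(𝔴+γ)*𝔴*Real.cos t ≠ 0 := by nlinarith
      have hγ3 : γ^3 ≠ 0 := by positivity
      rw [show ((γ:ℂ))^3 = ((γ^3:ℝ):ℂ) by push_cast; ring,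
        show ((𝔴:ℂ))^2 = ((𝔴^2:ℝ):ℂ) by push_cast; ring, Complex.mul_re]
      simp only [Complex.add_re, Complex.sub_re, Complex.add_im, Complex.sub_im,
        Complex.ofReal_re, Complex.ofReal_im, Complex.inv_re, Complex.inv_im, hnorm, hlog,
        Complex.div_re, Complex.div_im, Complex.mul_re, Complex.mul_im,
        Complex.normSq_ofReal]
      rw [mul_comm Complex.I, Complex.exp_mul_I, ← Complex.ofReal_cos, ← Complex.ofReal_sin]
      simp only [Complex.add_re, Complex.sub_re, Complex.add_im, Complex.sub_im, Complex.mul_re,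
        Complex.mul_im, Complex.ofReal_re, Complex.ofReal_im, Complex.I_re, Complex.I_im,
        Complex.re_ofNat, Complex.im_ofNat]
      field_simp
      ring
    -- Step 2: the explicit real function has derivative D at φ.
    have hQ' : (0:ℝ) ≤ 2*(𝔴+γ)*𝔴*(1-Real.cos φ) :=
      mul_nonneg (by positivity) (by linarith [Real.cos_le_one φ])
    have hQpos : 0 < (𝔴+γ)^2 + 𝔴^2 - 2*(𝔴+γ)*𝔴*Real.cos φ := by nlinarith
    have hQ : (𝔴+γ)^2 + 𝔴^2 - 2*(𝔴+γ)*𝔴*Real.cos φ ≠ 0 := ne_of_gt hQpos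
    have h1 : HasDerivAt (fun t : ℝ => (𝔴+γ) - 𝔴*Real.cos t) (𝔴*Real.sin φ) φ := by
      simpa using ((Real.hasDerivAt_cos φ).const_mul 𝔴).const_sub (𝔴+γ)
    have h2 : HasDerivAt (fun t : ℝ => (𝔴+γ)^2 + 𝔴^2 - 2*(𝔴+γ)*𝔴*Real.cos t)
        (2*(𝔴+γ)*𝔴*Real.sin φ) φ := by
      simpa using ((Real.hasDerivAt_cos φ).const_mul (2*(𝔴+γ)*𝔴)).const_sub ((𝔴+γ)^2 + 𝔴^2)
    have hdiv := h1.div h2 hQ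
    have h3 : HasDerivAt (fun t : ℝ => 𝔴*Real.cos t*(2*𝔴+γ)/γ^3)
        ((-(𝔴*Real.sin φ))*(2*𝔴+γ)/γ^3) φ := by
      simpa [neg_mul, neg_div, mul_comm, mul_assoc, mul_left_comm] using
        (((Real.hasDerivAt_cos φ).const_mul 𝔴).mul_const (2*𝔴+γ)).div_const (γ^3)
    have h4 := ((hdiv.sub h3).add_const (2*𝔴^2*Real.log 𝔴/γ^3)).const_mul (𝔴+γ)
    have h5 : HasDerivAt (fun t : ℝ =>
        (𝔴+γ) * (((𝔴+γ) - 𝔴*Real.cos t)/((𝔴+γ)^2 + 𝔴^2 - 2*(𝔴+γ)*𝔴*Real.cos t)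
            - 𝔴*Real.cos t*(2*𝔴+γ)/γ^3 + 2*𝔴^2*Real.log 𝔴/γ^3)) D φ := by
      convert h4 using 1
      case e'_4 => rfl
      case e'_5 => rfl
      case e'_8 => rfl
      rw [hD]
      have hs2 : Real.sin (φ/2) ^ 2 = (1 - Real.cos φ)/2 := by
        have h := Real.sin_sq_eq_half_sub (φ/2)
        rw [show 2*(φ/2) = φ by ring] at h
        linarith
      have hsin : Real.sin φ = 2 * Real.sin (φ/2) * Real.cos (φ/2) := by
        rw [show φ = 2*(φ/2) by ring, Real.sin_two_mul]; ring_nf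
      have hcos : Real.cos φ = 1 - 2 * Real.sin (φ/2)^2 := by rw [hs2]; ring
      rw [hsin, hcos]
      have hQ2 : (𝔴+γ)^2 + 𝔴^2 - 2*(𝔴+γ)*𝔴*(1 - 2*Real.sin (φ/2)^2) ≠ 0 := by
        rw [← hcos]; exact hQ
      have hQ3 : γ^2+2*𝔴^2+2*γ*𝔴-2*𝔴*(γ+𝔴)*(1-2*Real.sin (φ/2)^2) ≠ 0 := by
        intro h; apply hQ2; linear_combination h
      have hγ3 : (γ:ℝ)^3 ≠ 0 := by positivity
      have hγ0 : (γ:ℝ) ≠ 0 := ne_of_gt hγ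
      rw [show γ^2+2*𝔴^2+2*γ*𝔴-2*𝔴*(γ+𝔴)*(1-2*Real.sin (φ/2)^2)
          = (𝔴+γ)^2 + 𝔴^2 - 2*(𝔴+γ)*𝔴*(1 - 2*Real.sin (φ/2)^2) by ring]
      field_simp [hQ2, hQ3]
      have hQ4 : (𝔴+γ)^2+𝔴^2-𝔴*2*(1-2*Real.sin (φ/2)^2)*(𝔴+γ) ≠ 0 := by
        intro h; apply hQ2; linear_combination h
      field_simp [hQ4]
      ring
    exact h5.congr_of_eventuallyEq (Filter.Eventually.of_forall fun t => funeq t)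
  · -- Positivity of D.
    have hπ := Real.pi_pos
    have hs : 0 < Real.sin (φ/2) :=
      Real.sin_pos_of_pos_of_lt_pi (by linarith) (by linarith)
    have hc : 0 < Real.cos (φ/2) :=
      Real.cos_pos_of_mem_Ioo ⟨by linarith, by linarith⟩
    have hc1 : Real.cos φ ≤ 1 := Real.cos_le_one φ
    have hnum : 0 < 16 * 𝔴 ^ 2 * (γ + 𝔴) ^ 2 * (γ + 2 * 𝔴)
        * Real.sin (φ / 2) ^ 3 * Real.cos (φ / 2)
        * (γ ^ 2 + 𝔴 ^ 2 * (1 - Real.cos φ) + γ * 𝔴 * (1 - Real.cos φ)) := by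
      have h6 : 0 < γ ^ 2 + 𝔴 ^ 2 * (1 - Real.cos φ) + γ * 𝔴 * (1 - Real.cos φ) := by
        nlinarith [mul_nonneg (sq_nonneg 𝔴) (by linarith : (0:ℝ) ≤ 1 - Real.cos φ),
          mul_nonneg (mul_pos hγ h𝔴).le (by linarith : (0:ℝ) ≤ 1 - Real.cos φ)]
      positivity
    have hden : 0 < γ ^ 3
        * (γ ^ 2 + 2 * 𝔴 ^ 2 + 2 * γ * 𝔴 - 2 * 𝔴 * (γ + 𝔴) * Real.cos φ) ^ 2 := by
      have h7 : 0 < γ ^ 2 + 2 * 𝔴 ^ 2 + 2 * γ * 𝔴 - 2 * 𝔴 * (γ + 𝔴) * Real.cos φ := by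
        nlinarith [mul_nonneg (mul_pos (mul_pos two_pos h𝔴) (by linarith : (0:ℝ) < γ + 𝔴)).le
          (by linarith : (0:ℝ) ≤ 1 - Real.cos φ)]
      positivity
    rw [hD]
    exact div_pos hnum hden
end

section
/- Stationarity of the gB product measure for the homogeneous discrete dynamics: for parameters a, β > 0, ν ∈ [0,1) and c ∈ (0,1), let π(0) = (1−c)/(1−cν) and π(k) = c^k(1−c)(1−ν)/(1−cν) for k ≥ 1, and let u = acβ/(1+acβ). Then the single-site balance equations π(k+1)P(k+1→k) + π(k−1)P(k−1→k) + π(k)P(k→k) = π(k) hold for all k ≥ 0, where P(k+1→k) = (aβ/(1+aβ))(1−u); P(0→1) = u(1−ν)/(1+aβ); P(k−1→k) = u/(1+aβ) for k ≥ 2; P(0→0) = 1 − u(1−ν)/(1+aβ); P(k→k) = aβu/(1+aβ) + (1−u)/(1+aβ) for k ≥ 1; and terms with k−1 < 0 are absent. -/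
/-- Stationarity of the gB product measure for the homogeneous discrete dynamics:
`π` is a probability distribution on `ℤ_{≥0}`, and with `u = acβ/(1+acβ)` the
single-site balance equations hold for all `k ≥ 0`. -/
theorem gB_product_measure_stationary
    (a β ν c : ℝ) (ha : 0 < a) (hβ : 0 < β) (hν0 : 0 ≤ ν) (hν1 : ν < 1)
    (hc0 : 0 < c) (hc1 : c < 1)
    (π : ℕ → ℝ)
    (hπ0 : π 0 = (1 - c) / (1 - c * ν))
    (hπ : ∀ k : ℕ, 1 ≤ k → π k = c ^ k * (1 - c) * (1 - ν) / (1 - c * ν))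
    (u : ℝ) (hu : u = a * c * β / (1 + a * c * β)) :
    (∀ k, 0 ≤ π k) ∧ (∑' k : ℕ, π k) = 1 ∧
    (π 1 * (a * β / (1 + a * β) * (1 - u))
      + π 0 * (1 - u * (1 - ν) / (1 + a * β)) = π 0) ∧
    (π 2 * (a * β / (1 + a * β) * (1 - u))
      + π 0 * (u * (1 - ν) / (1 + a * β))
      + π 1 * (a * β * u / (1 + a * β) + (1 - u) / (1 + a * β)) = π 1) ∧
    (∀ k : ℕ, 2 ≤ k →
      π (k + 1) * (a * β / (1 + a * β) * (1 - u))
        + π (k - 1) * (u / (1 + a * β))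
        + π k * (a * β * u / (1 + a * β) + (1 - u) / (1 + a * β)) = π k) := by
  have hcν : c * ν < 1 := lt_of_le_of_lt (by nlinarith) hc1
  have hden : (0:ℝ) < 1 - c * ν := by linarith
  have hden' : (1:ℝ) - c * ν ≠ 0 := ne_of_gt hden
  have h1 : (0:ℝ) < 1 + a * β := by positivity
  have h1' : (1:ℝ) + a * β ≠ 0 := ne_of_gt h1
  have h2 : (0:ℝ) < 1 + a * c * β := by positivity
  have h2' : (1:ℝ) + a * c * β ≠ 0 := ne_of_gt h2
  refine ⟨?_, ?_, ?_, ?_, ?_⟩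
  · intro k
    rcases Nat.eq_zero_or_pos k with hk | hk
    · subst hk; rw [hπ0]
      exact div_nonneg (by linarith) (le_of_lt hden)
    · rw [hπ k hk]
      exact div_nonneg (mul_nonneg (mul_nonneg (pow_nonneg (le_of_lt hc0) k) (by linarith)) (by linarith)) (le_of_lt hden)
  · have hsucc : (fun k : ℕ => π (k + 1)) =
        fun k : ℕ => (c * (1 - c) * (1 - ν) / (1 - c * ν)) * c ^ k := by
      funext k
      rw [hπ (k + 1) (Nat.le_add_left 1 k)]
      ring
    have hgeom : Summable (fun k : ℕ => c ^ k) :=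
      summable_geometric_of_lt_one (le_of_lt hc0) hc1
    have hs1 : Summable (fun k : ℕ => π (k + 1)) := by
      rw [hsucc]; exact hgeom.mul_left _
    have hs : Summable π := (summable_nat_add_iff 1).mp hs1
    have := Summable.tsum_eq_zero_add hs
    rw [this, hsucc, tsum_mul_left, tsum_geometric_of_lt_one (le_of_lt hc0) hc1, hπ0]
    have hc1' : (1:ℝ) - c ≠ 0 := by intro h; linarith [hc1]
    field_simp
    ring
  · rw [hπ0, hπ 1 le_rfl, hu]
    field_simp
    ring
  · rw [hπ0, hπ 1 le_rfl, hπ 2 (by norm_num), hu]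
    field_simp
    ring
  · intro k hk
    obtain ⟨m, rfl⟩ : ∃ m : ℕ, k = m + 2 := ⟨k - 2, by omega⟩
    have h1k := hπ (m + 2 + 1) (by omega)
    have h2k := hπ (m + 2 - 1) (by omega)
    have h3k := hπ (m + 2) (by omega)
    rw [h1k, h2k, h3k, hu]
    have : m + 2 - 1 = m + 1 := by omega
    rw [this]
    field_simp
    ring
end

section
/- The limit shape satisfies the hydrodynamic PDE: suppose ξ is continuous at χ, 𝔴°(θ,χ) ∈ (0, ξ(χ)) solves ∫₀^χ ξ(u)(ξ(u)+𝔴°)/(ξ(u)−𝔴°)³ du = θ, and 𝔥(θ,χ) = θ𝔴° − ∫₀^χ ξ(u)𝔴°/(ξ(u)−𝔴°)² du. Then the partial derivatives satisfy ∂𝔥/∂θ = 𝔴° and ∂𝔥/∂χ = −ξ(χ)·𝔴° / (ξ(χ)−𝔴°)², so that 𝔥_χ = −ξ(χ)·𝔥_θ / (ξ(χ)−𝔥_θ)². -/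
open MeasureTheory

open intervalIntegral Filter Asymptotics

/-- Bounded measurable functions are interval integrable. -/
lemma my_intInt (f : ℝ → ℝ) (C a b : ℝ) (hf : Measurable f)
    (hb : ∀ u, |f u| ≤ C) : IntervalIntegrable f volume a b := by
  rw [intervalIntegrable_iff]
  haveI : IsFiniteMeasure (volume.restrict (Set.uIoc a b)) :=
    ⟨by rw [Measure.restrict_apply_univ]; exact measure_Ioc_lt_top⟩
  exact ⟨hf.aestronglyMeasurable.restrict,
    HasFiniteIntegral.of_bounded (C := C) (ae_of_all _ fun u => hb u)⟩

/-- Pointwise quadratic error bound for the `w`-derivative of the integrand. -/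
lemma ptwise_quad (x w w₀ M ε : ℝ) (hε : 0 < ε) (h1 : ε ≤ x - w) (h2 : ε ≤ x - w₀)
    (hx : |x| ≤ M) (hw : |w| ≤ M) (hw0 : |w₀| ≤ M) :
    |x * w / (x - w) ^ 2 - x * w₀ / (x - w₀) ^ 2 - (w - w₀) * (x * (x + w₀) / (x - w₀) ^ 3)|
      ≤ 4 * M ^ 3 / ε ^ 5 * (w - w₀) ^ 2 := by
  have hxw : x - w ≠ 0 := (hε.trans_le h1).ne'
  have hxw0 : x - w₀ ≠ 0 := (hε.trans_le h2).ne'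
  have hid : x * w / (x - w) ^ 2 - x * w₀ / (x - w₀) ^ 2
      - (w - w₀) * (x * (x + w₀) / (x - w₀) ^ 3)
      = x * (2 * x ^ 2 - w * x - w * w₀) / ((x - w) ^ 2 * (x - w₀) ^ 3) * (w - w₀) ^ 2 := by
    field_simp
    ring
  rw [hid, abs_mul, abs_div]
  have hM : 0 ≤ M := le_trans (abs_nonneg x) hx
  have hnum : |x * (2 * x ^ 2 - w * x - w * w₀)| ≤ 4 * M ^ 3 := by
    rw [abs_mul]
    have h1' : |2 * x ^ 2 - w * x - w * w₀| ≤ 4 * M ^ 2 := by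
      have := abs_sub (2 * x ^ 2 - w * x) (w * w₀)
      have := abs_sub (2 * x ^ 2) (w * x)
      have e1 : |2 * x ^ 2| = 2 * |x| ^ 2 := by
        rw [abs_mul, abs_pow]; norm_num
      have e2 : |w * x| ≤ M * M := by
        rw [abs_mul]; exact mul_le_mul hw hx (abs_nonneg x) hM
      have e3 : |w * w₀| ≤ M * M := by
        rw [abs_mul]; exact mul_le_mul hw hw0 (abs_nonneg w₀) hM
      nlinarith [sq_nonneg (|x| - M), abs_nonneg x]
    calc |x| * |2 * x ^ 2 - w * x - w * w₀| ≤ M * (4 * M ^ 2) :=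
          mul_le_mul hx h1' (abs_nonneg _) hM
      _ = 4 * M ^ 3 := by ring
  have hden : ε ^ 5 ≤ |(x - w) ^ 2 * (x - w₀) ^ 3| := by
    rw [abs_mul, abs_pow, abs_pow]
    calc ε ^ 5 = ε ^ 2 * ε ^ 3 := by ring
      _ ≤ |x - w| ^ 2 * |x - w₀| ^ 3 := by
          apply mul_le_mul
          · exact pow_le_pow_left₀ hε.le (le_trans h1 (le_abs_self _)) 2
          · exact pow_le_pow_left₀ hε.le (le_trans h2 (le_abs_self _)) 3
          · positivity
          · positivity
  rw [abs_pow, sq_abs]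
  have h5 : (0:ℝ) < ε ^ 5 := by positivity
  gcongr

/-- Pointwise linear (Lipschitz) bound for the integrand difference. -/
lemma ptwise_lin (x w w₀ M ε : ℝ) (hε : 0 < ε) (h1 : ε ≤ x - w) (h2 : ε ≤ x - w₀)
    (hx : |x| ≤ M) (hw : |w| ≤ M) (hw0 : |w₀| ≤ M) :
    |x * w / (x - w) ^ 2 - x * w₀ / (x - w₀) ^ 2| ≤ 2 * M ^ 3 / ε ^ 4 * |w - w₀| := by
  have hxw : x - w ≠ 0 := (hε.trans_le h1).ne'
  have hxw0 : x - w₀ ≠ 0 := (hε.trans_le h2).ne'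
  have hid : x * w / (x - w) ^ 2 - x * w₀ / (x - w₀) ^ 2
      = x * (x ^ 2 - w * w₀) / ((x - w) ^ 2 * (x - w₀) ^ 2) * (w - w₀) := by
    field_simp
    ring
  rw [hid, abs_mul, abs_div]
  have hM : 0 ≤ M := le_trans (abs_nonneg x) hx
  have hnum : |x * (x ^ 2 - w * w₀)| ≤ 2 * M ^ 3 := by
    rw [abs_mul]
    have h1' : |x ^ 2 - w * w₀| ≤ 2 * M ^ 2 := by
      have := abs_sub (x ^ 2) (w * w₀)
      have e1 : |x ^ 2| = |x| ^ 2 := abs_pow x 2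
      have e3 : |w * w₀| ≤ M * M := by
        rw [abs_mul]; exact mul_le_mul hw hw0 (abs_nonneg w₀) hM
      nlinarith [sq_nonneg (|x| - M), abs_nonneg x]
    calc |x| * |x ^ 2 - w * w₀| ≤ M * (2 * M ^ 2) :=
          mul_le_mul hx h1' (abs_nonneg _) hM
      _ = 2 * M ^ 3 := by ring
  have hden : ε ^ 4 ≤ |(x - w) ^ 2 * (x - w₀) ^ 2| := by
    rw [abs_mul, abs_pow, abs_pow]
    calc ε ^ 4 = ε ^ 2 * ε ^ 2 := by ring
      _ ≤ |x - w| ^ 2 * |x - w₀| ^ 2 := by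
          apply mul_le_mul
          · exact pow_le_pow_left₀ hε.le (le_trans h1 (le_abs_self _)) 2
          · exact pow_le_pow_left₀ hε.le (le_trans h2 (le_abs_self _)) 2
          · positivity
          · positivity
  have h4 : (0:ℝ) < ε ^ 4 := by positivity
  gcongr

section
variable (ξ : ℝ → ℝ) (m M : ℝ)

lemma intInt_g (hmeas : Measurable ξ) (hm : 0 < m) (hlb : ∀ u, m ≤ ξ u) (hub : ∀ u, ξ u ≤ M)
    (w a b : ℝ) (hw : w < m) :
    IntervalIntegrable (fun u => ξ u * w / (ξ u - w) ^ 2) volume a b := by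
  apply my_intInt _ (M * |w| / (m - w) ^ 2) a b (by measurability)
  intro u
  have h1 : (0:ℝ) < m - w := by linarith
  have h2 : m - w ≤ ξ u - w := by linarith [hlb u]
  have hM : (0:ℝ) ≤ M := le_trans hm.le (le_trans (hlb 0) (hub 0))
  rw [abs_div, abs_mul, abs_pow]
  gcongr
  · exact (abs_of_pos (hm.trans_le (hlb u))).le.trans (hub u)
  · rw [abs_of_pos (h1.trans_le h2)]; exact h2

lemma intInt_F (hmeas : Measurable ξ) (hm : 0 < m) (hlb : ∀ u, m ≤ ξ u) (hub : ∀ u, ξ u ≤ M)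
    (w a b : ℝ) (hw : w < m) :
    IntervalIntegrable (fun u => ξ u * (ξ u + w) / (ξ u - w) ^ 3) volume a b := by
  apply my_intInt _ (M * (M + |w|) / (m - w) ^ 3) a b (by measurability)
  intro u
  have h1 : (0:ℝ) < m - w := by linarith
  have h2 : m - w ≤ ξ u - w := by linarith [hlb u]
  have hxu : |ξ u| ≤ M := (abs_of_pos (hm.trans_le (hlb u))).le.trans (hub u)
  have hM : (0:ℝ) ≤ M := le_trans hm.le (le_trans (hlb 0) (hub 0))
  rw [abs_div, abs_mul, abs_pow]
  gcongr
  · exact (abs_add_le _ _).trans (by gcongr)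
  · rw [abs_of_pos (h1.trans_le h2)]; exact h2

/-- Differentiation in the parameter `w` under the integral sign. -/
lemma hasDerivAt_intw (hmeas : Measurable ξ) (hm : 0 < m) (hlb : ∀ u, m ≤ ξ u)
    (hub : ∀ u, ξ u ≤ M) (c w₀ : ℝ) (h0 : 0 < w₀) (h1 : w₀ < m) :
    HasDerivAt (fun w => ∫ u in (0:ℝ)..c, ξ u * w / (ξ u - w) ^ 2)
      (∫ u in (0:ℝ)..c, ξ u * (ξ u + w₀) / (ξ u - w₀) ^ 3) w₀ := by
  have hmM : m ≤ M := le_trans (hlb 0) (hub 0)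
  set ε : ℝ := (m - w₀) / 2 with hε
  have hεpos : 0 < ε := by rw [hε]; linarith
  rw [hasDerivAt_iff_isLittleO]
  have hsq : (fun w : ℝ => ‖w - w₀‖ ^ 2) =o[nhds w₀] fun w => w - w₀ :=
    isLittleO_pow_sub_sub w₀ one_lt_two
  refine IsBigO.trans_isLittleO ?_ hsq
  rw [isBigO_iff]
  refine ⟨4 * M ^ 3 / ε ^ 5 * |c|, ?_⟩
  have hball : ∀ᶠ w in nhds w₀, w ∈ Metric.ball w₀ ε :=
    Metric.ball_mem_nhds w₀ hεpos
  filter_upwards [hball] with w hw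
  rw [Metric.mem_ball, Real.dist_eq] at hw
  have hwlt : w < m := by
    have := abs_lt.mp hw
    rw [hε] at *
    linarith [this.2]
  -- rewrite difference of integrals as a single integral
  have hI1 := intInt_g ξ m M hmeas hm hlb hub w 0 c hwlt
  have hI2 := intInt_g ξ m M hmeas hm hlb hub w₀ 0 c h1
  have hI3 := intInt_F ξ m M hmeas hm hlb hub w₀ 0 c h1
  have hkey : (∫ u in (0:ℝ)..c, ξ u * w / (ξ u - w) ^ 2)
      - (∫ u in (0:ℝ)..c, ξ u * w₀ / (ξ u - w₀) ^ 2)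
      - (w - w₀) • (∫ u in (0:ℝ)..c, ξ u * (ξ u + w₀) / (ξ u - w₀) ^ 3)
      = ∫ u in (0:ℝ)..c, (ξ u * w / (ξ u - w) ^ 2 - ξ u * w₀ / (ξ u - w₀) ^ 2
          - (w - w₀) * (ξ u * (ξ u + w₀) / (ξ u - w₀) ^ 3)) := by
    rw [smul_eq_mul, ← intervalIntegral.integral_const_mul,
      ← intervalIntegral.integral_sub hI1 hI2,
      ← intervalIntegral.integral_sub (hI1.sub hI2) (hI3.const_mul _)]
  rw [hkey]
  have hbd : ∀ x ∈ Set.uIoc (0:ℝ) c,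
      ‖ξ x * w / (ξ x - w) ^ 2 - ξ x * w₀ / (ξ x - w₀) ^ 2
        - (w - w₀) * (ξ x * (ξ x + w₀) / (ξ x - w₀) ^ 3)‖
      ≤ 4 * M ^ 3 / ε ^ 5 * (w - w₀) ^ 2 := by
    intro x _
    apply ptwise_quad _ _ _ M ε hεpos
    · have := abs_lt.mp hw
      rw [hε] at *; linarith [hlb x, this.2]
    · rw [hε]; linarith [hlb x]
    · exact (abs_of_pos (hm.trans_le (hlb x))).le.trans (hub x)
    · have := abs_lt.mp hw
      rw [abs_le]; constructor <;> [rw [hε] at *; skip] <;> rw [hε] at * <;>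
        [linarith [this.1]; linarith [this.2]]
    · rw [abs_le]; constructor <;> linarith
  calc ‖∫ u in (0:ℝ)..c, (ξ u * w / (ξ u - w) ^ 2 - ξ u * w₀ / (ξ u - w₀) ^ 2
          - (w - w₀) * (ξ u * (ξ u + w₀) / (ξ u - w₀) ^ 3))‖
      ≤ 4 * M ^ 3 / ε ^ 5 * (w - w₀) ^ 2 * |c - 0| :=
        intervalIntegral.norm_integral_le_of_norm_le_const hbd
    _ = 4 * M ^ 3 / ε ^ 5 * |c| * ‖‖w - w₀‖ ^ 2‖ := by
        rw [sub_zero]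
        simp only [Real.norm_eq_abs, abs_pow, abs_abs, sq_abs]
        ring
end

set_option maxHeartbeats 2000000 in
/-- The limit shape satisfies the hydrodynamic PDE: if `ξ` is continuous at `χ₀`,
`𝔴(θ,χ) ∈ (0, ξ(χ))` solves the critical point equation near `(θ₀,χ₀)`, and
`𝔥(θ,χ) = θ𝔴 − ∫₀^χ ξ(u)𝔴/(ξ(u)−𝔴)² du`, then `∂𝔥/∂θ = 𝔴`,
`∂𝔥/∂χ = −ξ(χ)𝔴/(ξ(χ)−𝔴)²`, and hence `𝔥_χ = −ξ(χ)𝔥_θ/(ξ(χ)−𝔥_θ)²`. -/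
theorem limit_shape_hydrodynamic_pde
    (m M θ₀ χ₀ : ℝ) (hχ₀ : 0 < χ₀) (hm : 0 < m)
    (ξ : ℝ → ℝ) (hmeas : Measurable ξ)
    (hlb : ∀ u, m ≤ ξ u) (hub : ∀ u, ξ u ≤ M)
    (hcont : ContinuousAt ξ χ₀)
    (𝔴 𝔥 : ℝ → ℝ → ℝ)
    (U : Set (ℝ × ℝ)) (hU : IsOpen U) (hmemU : (θ₀, χ₀) ∈ U)
    (hUpos : ∀ p ∈ U, 0 < p.2)
    (h𝔴mem : ∀ p ∈ U, 0 < 𝔴 p.1 p.2 ∧ 𝔴 p.1 p.2 < m)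
    (hcrit : ∀ p ∈ U,
      (∫ u in (0:ℝ)..p.2, ξ u * (ξ u + 𝔴 p.1 p.2) / (ξ u - 𝔴 p.1 p.2) ^ 3) = p.1)
    (h𝔥 : ∀ p ∈ U,
      𝔥 p.1 p.2 = p.1 * 𝔴 p.1 p.2
        - ∫ u in (0:ℝ)..p.2, ξ u * 𝔴 p.1 p.2 / (ξ u - 𝔴 p.1 p.2) ^ 2)
    (wθ wχ : ℝ)
    (hdθ : HasDerivAt (fun θ => 𝔴 θ χ₀) wθ θ₀)
    (hdχ : HasDerivAt (fun χ => 𝔴 θ₀ χ) wχ χ₀) :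
    HasDerivAt (fun θ => 𝔥 θ χ₀) (𝔴 θ₀ χ₀) θ₀ ∧
    HasDerivAt (fun χ => 𝔥 θ₀ χ) (-(ξ χ₀ * 𝔴 θ₀ χ₀) / (ξ χ₀ - 𝔴 θ₀ χ₀) ^ 2) χ₀ ∧
    (∀ dθ dχ : ℝ, HasDerivAt (fun θ => 𝔥 θ χ₀) dθ θ₀ →
      HasDerivAt (fun χ => 𝔥 θ₀ χ) dχ χ₀ →
      dχ = -(ξ χ₀ * dθ) / (ξ χ₀ - dθ) ^ 2) := by
  have hmM : m ≤ M := le_trans (hlb 0) (hub 0)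
  have hMpos : 0 < M := hm.trans_le hmM
  have hw0mem := h𝔴mem (θ₀, χ₀) hmemU
  dsimp only at hw0mem
  obtain ⟨hw0pos, hw0lt⟩ := hw0mem
  set w₀ : ℝ := 𝔴 θ₀ χ₀ with hw₀def
  -- derivative of the Φ integral w.r.t. the parameter w
  have hΦ := hasDerivAt_intw ξ m M hmeas hm hlb hub χ₀ w₀ hw0pos hw0lt
  have hcrit0 := hcrit (θ₀, χ₀) hmemU
  dsimp only at hcrit0
  rw [hcrit0] at hΦ
  -- θ-derivative
  have hUθ : ∀ᶠ θ in nhds θ₀, (θ, χ₀) ∈ U := by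
    have hc : ContinuousAt (fun θ : ℝ => (θ, χ₀)) θ₀ :=
      (continuous_id.prodMk continuous_const).continuousAt
    exact hc.eventually (hU.eventually_mem hmemU)
  have hcompθ : HasDerivAt
      (fun θ => ∫ u in (0:ℝ)..χ₀, ξ u * 𝔴 θ χ₀ / (ξ u - 𝔴 θ χ₀) ^ 2) (θ₀ * wθ) θ₀ :=
    by have := hΦ.comp θ₀ hdθ; exact this
  have hθmain : HasDerivAt (fun θ => 𝔥 θ χ₀) w₀ θ₀ := by
    have h2 : HasDerivAt
        (fun θ => θ * 𝔴 θ χ₀ - ∫ u in (0:ℝ)..χ₀, ξ u * 𝔴 θ χ₀ / (ξ u - 𝔴 θ χ₀) ^ 2)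
        (1 * w₀ + θ₀ * wθ - θ₀ * wθ) θ₀ := ((hasDerivAt_id θ₀).mul hdθ).sub hcompθ
    have hval : 1 * w₀ + θ₀ * wθ - θ₀ * wθ = w₀ := by ring
    rw [hval] at h2
    apply h2.congr_of_eventuallyEq
    filter_upwards [hUθ] with θ hθ
    have h := h𝔥 (θ, χ₀) hθ
    dsimp only at h
    exact h
  -- χ-derivative
  have hUχ : ∀ᶠ χ in nhds χ₀, (θ₀, χ) ∈ U := by
    have hc : ContinuousAt (fun χ : ℝ => (θ₀, χ)) χ₀ :=
      (continuous_const.prodMk continuous_id).continuousAt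
    exact hc.eventually (hU.eventually_mem hmemU)
  set ε : ℝ := (m - w₀) / 2 with hεdef
  have hεpos : 0 < ε := by rw [hεdef]; linarith
  set L : ℝ := 2 * M ^ 3 / ε ^ 4 with hLdef
  have hLpos : 0 < L := by rw [hLdef]; positivity
  have hcompχ : HasDerivAt
      (fun χ => ∫ u in (0:ℝ)..χ₀, ξ u * 𝔴 θ₀ χ / (ξ u - 𝔴 θ₀ χ) ^ 2) (θ₀ * wχ) χ₀ :=
    by have := hΦ.comp χ₀ hdχ; exact this
  have hg0meas : Measurable (fun u => ξ u * w₀ / (ξ u - w₀) ^ 2) := by measurability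
  have hcontg : ContinuousAt (fun u => ξ u * w₀ / (ξ u - w₀) ^ 2) χ₀ := by
    apply ContinuousAt.div
    · exact hcont.mul continuousAt_const
    · exact (hcont.sub continuousAt_const).pow 2
    · have hne : ξ χ₀ - w₀ ≠ 0 := by have := hlb χ₀; intro h; linarith [hlb χ₀]
      exact pow_ne_zero 2 hne
  have hS : HasDerivAt (fun χ => ∫ u in χ₀..χ, ξ u * w₀ / (ξ u - w₀) ^ 2)
      (ξ χ₀ * w₀ / (ξ χ₀ - w₀) ^ 2) χ₀ :=
    intervalIntegral.integral_hasDerivAt_right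
      (intInt_g ξ m M hmeas hm hlb hub w₀ χ₀ χ₀ hw0lt)
      hg0meas.stronglyMeasurable.stronglyMeasurableAtFilter hcontg
  -- the error term has derivative 0
  have hE : HasDerivAt
      (fun χ => (∫ u in χ₀..χ, ξ u * 𝔴 θ₀ χ / (ξ u - 𝔴 θ₀ χ) ^ 2)
        - ∫ u in χ₀..χ, ξ u * w₀ / (ξ u - w₀) ^ 2) 0 χ₀ := by
    rw [hasDerivAt_iff_isLittleO]
    have heq : (fun χ => ((∫ u in χ₀..χ, ξ u * 𝔴 θ₀ χ / (ξ u - 𝔴 θ₀ χ) ^ 2)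
          - ∫ u in χ₀..χ, ξ u * w₀ / (ξ u - w₀) ^ 2)
        - ((∫ u in χ₀..χ₀, ξ u * 𝔴 θ₀ χ₀ / (ξ u - 𝔴 θ₀ χ₀) ^ 2)
          - ∫ u in χ₀..χ₀, ξ u * w₀ / (ξ u - w₀) ^ 2) - (χ - χ₀) • (0:ℝ))
        = fun χ => (∫ u in χ₀..χ, ξ u * 𝔴 θ₀ χ / (ξ u - 𝔴 θ₀ χ) ^ 2)
          - ∫ u in χ₀..χ, ξ u * w₀ / (ξ u - w₀) ^ 2 := by
      funext χ; simp [intervalIntegral.integral_same]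
    rw [heq, Asymptotics.isLittleO_iff]
    intro c hc
    have hwcont : ∀ᶠ χ in nhds χ₀, |𝔴 θ₀ χ - w₀| < min ε (c / L) := by
      have ht : Filter.Tendsto (fun χ => 𝔴 θ₀ χ) (nhds χ₀) (nhds w₀) := hdχ.continuousAt
      have hmem : Metric.ball w₀ (min ε (c / L)) ∈ nhds w₀ :=
        Metric.ball_mem_nhds w₀ (lt_min hεpos (by positivity))
      filter_upwards [ht hmem] with χ hχ
      simpa [Real.dist_eq] using hχ
    filter_upwards [hwcont, hUχ] with χ hχ hχU
    have hwχmem := h𝔴mem (θ₀, χ) hχU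
    dsimp only at hwχmem
    have hwχlt : 𝔴 θ₀ χ < m := hwχmem.2
    have hwε : |𝔴 θ₀ χ - w₀| < ε := lt_of_lt_of_le hχ (min_le_left _ _)
    have hwcL : |𝔴 θ₀ χ - w₀| ≤ c / L := le_of_lt (lt_of_lt_of_le hχ (min_le_right _ _))
    have hI1 := intInt_g ξ m M hmeas hm hlb hub (𝔴 θ₀ χ) χ₀ χ hwχlt
    have hI2 := intInt_g ξ m M hmeas hm hlb hub w₀ χ₀ χ hw0lt
    rw [← intervalIntegral.integral_sub hI1 hI2]
    have hbd : ∀ x ∈ Set.uIoc χ₀ χ,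
        ‖ξ x * 𝔴 θ₀ χ / (ξ x - 𝔴 θ₀ χ) ^ 2 - ξ x * w₀ / (ξ x - w₀) ^ 2‖ ≤ c := by
      intro x _
      have hb := ptwise_lin (ξ x) (𝔴 θ₀ χ) w₀ M ε hεpos
        (by have := abs_lt.mp hwε; rw [hεdef] at *; linarith [hlb x, this.2])
        (by rw [hεdef]; linarith [hlb x])
        ((abs_of_pos (hm.trans_le (hlb x))).le.trans (hub x))
        (by have := abs_lt.mp hwε
            rw [abs_le]; constructor <;> rw [hεdef] at * <;>
              [linarith [this.1]; linarith [this.2, hwχmem.1]])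
        (by rw [abs_le]; constructor <;> linarith)
      refine hb.trans ?_
      calc 2 * M ^ 3 / ε ^ 4 * |𝔴 θ₀ χ - w₀| = L * |𝔴 θ₀ χ - w₀| := by rw [hLdef]
        _ ≤ L * (c / L) := by gcongr
        _ = c := by field_simp
    calc ‖∫ u in χ₀..χ, (ξ u * 𝔴 θ₀ χ / (ξ u - 𝔴 θ₀ χ) ^ 2 - ξ u * w₀ / (ξ u - w₀) ^ 2)‖
        ≤ c * |χ - χ₀| := intervalIntegral.norm_integral_le_of_norm_le_const hbd
      _ = c * ‖χ - χ₀‖ := by rw [Real.norm_eq_abs]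
  have hχmain : HasDerivAt (fun χ => 𝔥 θ₀ χ)
      (-(ξ χ₀ * w₀) / (ξ χ₀ - w₀) ^ 2) χ₀ := by
    have hsum : HasDerivAt
        (fun χ => θ₀ * 𝔴 θ₀ χ
          - (∫ u in (0:ℝ)..χ₀, ξ u * 𝔴 θ₀ χ / (ξ u - 𝔴 θ₀ χ) ^ 2)
          - (∫ u in χ₀..χ, ξ u * w₀ / (ξ u - w₀) ^ 2)
          - ((∫ u in χ₀..χ, ξ u * 𝔴 θ₀ χ / (ξ u - 𝔴 θ₀ χ) ^ 2)
            - ∫ u in χ₀..χ, ξ u * w₀ / (ξ u - w₀) ^ 2))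
        (θ₀ * wχ - θ₀ * wχ - ξ χ₀ * w₀ / (ξ χ₀ - w₀) ^ 2 - 0) χ₀ :=
      (((hdχ.const_mul θ₀).sub hcompχ).sub hS).sub hE
    have hval : θ₀ * wχ - θ₀ * wχ - ξ χ₀ * w₀ / (ξ χ₀ - w₀) ^ 2 - 0
        = -(ξ χ₀ * w₀) / (ξ χ₀ - w₀) ^ 2 := by ring
    rw [hval] at hsum
    apply hsum.congr_of_eventuallyEq
    filter_upwards [hUχ] with χ hχU
    have hwχmem := h𝔴mem (θ₀, χ) hχU
    dsimp only at hwχmem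
    have hwχlt : 𝔴 θ₀ χ < m := hwχmem.2
    have hsplit : (∫ u in (0:ℝ)..χ, ξ u * 𝔴 θ₀ χ / (ξ u - 𝔴 θ₀ χ) ^ 2)
        = (∫ u in (0:ℝ)..χ₀, ξ u * 𝔴 θ₀ χ / (ξ u - 𝔴 θ₀ χ) ^ 2)
          + ∫ u in χ₀..χ, ξ u * 𝔴 θ₀ χ / (ξ u - 𝔴 θ₀ χ) ^ 2 :=
      (intervalIntegral.integral_add_adjacent_intervals
        (intInt_g ξ m M hmeas hm hlb hub (𝔴 θ₀ χ) 0 χ₀ hwχlt)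
        (intInt_g ξ m M hmeas hm hlb hub (𝔴 θ₀ χ) χ₀ χ hwχlt)).symm
    have h := h𝔥 (θ₀, χ) hχU
    dsimp only at h
    rw [h, hsplit]
    ring
  refine ⟨hθmain, hχmain, ?_⟩
  intro dθ dχ h1 h2
  have e1 : dθ = w₀ := h1.unique hθmain
  have e2 : dχ = -(ξ χ₀ * w₀) / (ξ χ₀ - w₀) ^ 2 := h2.unique hχmain
  rw [e1, e2]
end

section
/- Expansion of the double critical point near the traffic jam: the unique root 𝔴°(ε) in (0, 1/2) of the polynomial −11+20ε+(103−20ε)v−30(13+2ε)v²+20(38+5ε)v³−40(20+ε)v⁴+432v⁵−96v⁶ satisfies 𝔴°(ε) = 1/2 − (1/2)ε^{1/4} − (1/5)ε^{1/2} + (7/100)ε^{3/4} + (191/2000)ε + O(ε^{5/4}) as ε → 0⁺. -/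
-- bound on the residual F(T(d)) = d^8 * R(d)
lemma R_bound (d : ℝ) (hd0 : 0 < d) (hd : d ≤ 1/3) :
    |(-271/500 : ℝ) - (711/250) * d^1 - (3039/800) * d^2 - (307903/200000) * d^3 + (7155429/5000000) * d^4 + (19565727/10000000) * d^5 + (107594861/200000000) * d^6 - (7102563/15625000) * d^7 - (76534854019/200000000000) * d^8 - (10341507223/400000000000) * d^9 + (161228183267/2000000000000) * d^10 + (555259132889/20000000000000) * d^11 - (12022504673959/2000000000000000) * d^12 - (5067934646559/1000000000000000) * d^13 - (1640954524113/5000000000000000) * d^14 + (16014278822913/50000000000000000) * d^15 + (145653678817923/2000000000000000000) * d^16| ≤ 2 := by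
  have n1 : (0:ℝ) ≤ d^1 := by positivity
  have n2 : (0:ℝ) ≤ d^2 := by positivity
  have n3 : (0:ℝ) ≤ d^3 := by positivity
  have n4 : (0:ℝ) ≤ d^4 := by positivity
  have n5 : (0:ℝ) ≤ d^5 := by positivity
  have n6 : (0:ℝ) ≤ d^6 := by positivity
  have n7 : (0:ℝ) ≤ d^7 := by positivity
  have n8 : (0:ℝ) ≤ d^8 := by positivity
  have n9 : (0:ℝ) ≤ d^9 := by positivity
  have n10 : (0:ℝ) ≤ d^10 := by positivity
  have n11 : (0:ℝ) ≤ d^11 := by positivity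
  have n12 : (0:ℝ) ≤ d^12 := by positivity
  have n13 : (0:ℝ) ≤ d^13 := by positivity
  have n14 : (0:ℝ) ≤ d^14 := by positivity
  have n15 : (0:ℝ) ≤ d^15 := by positivity
  have n16 : (0:ℝ) ≤ d^16 := by positivity
  have e1 : d^1 ≤ 1/3 := by simpa using hd
  have e2 : d^2 ≤ 1/9 := by have := pow_le_pow_left₀ hd0.le hd 2; norm_num at this; linarith
  have e3 : d^3 ≤ 1/27 := by have := pow_le_pow_left₀ hd0.le hd 3; norm_num at this; linarith
  have e4 : d^4 ≤ 1/81 := by have := pow_le_pow_left₀ hd0.le hd 4; norm_num at this; linarith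
  have e5 : d^5 ≤ 1/243 := by have := pow_le_pow_left₀ hd0.le hd 5; norm_num at this; linarith
  have e6 : d^6 ≤ 1/729 := by have := pow_le_pow_left₀ hd0.le hd 6; norm_num at this; linarith
  have e7 : d^7 ≤ 1/2187 := by have := pow_le_pow_left₀ hd0.le hd 7; norm_num at this; linarith
  have e8 : d^8 ≤ 1/6561 := by have := pow_le_pow_left₀ hd0.le hd 8; norm_num at this; linarith
  have e9 : d^9 ≤ 1/19683 := by have := pow_le_pow_left₀ hd0.le hd 9; norm_num at this; linarith
  have e10 : d^10 ≤ 1/59049 := by have := pow_le_pow_left₀ hd0.le hd 10; norm_num at this; linarith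
  have e11 : d^11 ≤ 1/177147 := by have := pow_le_pow_left₀ hd0.le hd 11; norm_num at this; linarith
  have e12 : d^12 ≤ 1/531441 := by have := pow_le_pow_left₀ hd0.le hd 12; norm_num at this; linarith
  have e13 : d^13 ≤ 1/1594323 := by have := pow_le_pow_left₀ hd0.le hd 13; norm_num at this; linarith
  have e14 : d^14 ≤ 1/4782969 := by have := pow_le_pow_left₀ hd0.le hd 14; norm_num at this; linarith
  have e15 : d^15 ≤ 1/14348907 := by have := pow_le_pow_left₀ hd0.le hd 15; norm_num at this; linarith
  have e16 : d^16 ≤ 1/43046721 := by have := pow_le_pow_left₀ hd0.le hd 16; norm_num at this; linarith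
  rw [abs_le]
  constructor <;> linarith

set_option maxHeartbeats 8000000

lemma key_bound (d s : ℝ) (hd0 : 0 < d) (hd : d ≤ 1/3)
    (hs0 : 0 < s) (hs1 : s < 1/2)
    (hF : s^4*(80+144*s+96*s^2) = d^4*(5+25*s+30*s^2-20*s^3-40*s^4)) :
    |s - (d/2 + d^2/5 - 7*d^3/100 - 191*d^4/2000)| ≤ d^5 := by
  obtain ⟨T, hTdef⟩ : ∃ T : ℝ, T = d/2 + d^2/5 - 7*d^3/100 - 191*d^4/2000 := ⟨_, rfl⟩
  rw [show d/2 + d^2/5 - 7*d^3/100 - 191*d^4/2000 = T from hTdef.symm]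
  have hh1 : (5:ℝ) ≤ 5+25*s+30*s^2-20*s^3-40*s^4 := by
    nlinarith [mul_nonneg (mul_nonneg (mul_nonneg hs0.le hs0.le) hs0.le)
        (by linarith : (0:ℝ) ≤ 1 - 2*s),
      mul_nonneg hs0.le (mul_nonneg (by linarith : (0:ℝ) ≤ 1 - 2*s)
        (by linarith : (0:ℝ) ≤ 1 + 2*s))]
  have hh2 : (5:ℝ)+25*s+30*s^2-20*s^3-40*s^4 ≤ 20 := by
    nlinarith [mul_pos (by linarith : (0:ℝ) < 1 - 2*s)
      (by nlinarith : (0:ℝ) < 30 - 40*s^3 - 40*s^2 + 10*s)]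
  have k1 : 80*s^4 ≤ s^4*(80+144*s+96*s^2) := by
    nlinarith [mul_nonneg (pow_nonneg hs0.le 4) hs0.le,
      mul_nonneg (pow_nonneg hs0.le 4) (mul_nonneg hs0.le hs0.le)]
  have k2 : d^4*(5+25*s+30*s^2-20*s^3-40*s^4) ≤ 20*d^4 := by nlinarith [pow_pos hd0 4]
  have k3 : s^4*(80+144*s+96*s^2) ≤ 176*s^4 := by
    nlinarith [mul_nonneg (pow_nonneg hs0.le 4)
      (mul_nonneg (by linarith : (0:ℝ) ≤ 1-2*s) (by linarith : (0:ℝ) ≤ s+2))]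
  have k4 : 5*d^4 ≤ d^4*(5+25*s+30*s^2-20*s^3-40*s^4) := by nlinarith [pow_pos hd0 4]
  have hub : s ≤ 3/4*d := by
    by_contra hcon
    push_neg at hcon
    have h4 : 81/256*d^4 < s^4 := by
      calc 81/256*d^4 = (3/4*d)^4 := by ring
        _ < s^4 := by
            apply pow_lt_pow_left₀ hcon (by positivity)
            norm_num
    linarith [hF]
  have hlb : 2/5*d ≤ s := by
    by_contra hcon
    push_neg at hcon
    have h4 : s^4 < 16/625*d^4 := by
      calc s^4 < (2/5*d)^4 := by
            apply pow_lt_pow_left₀ hcon hs0.le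
            norm_num
        _ = 16/625*d^4 := by ring
    linarith [hF]
  have hd2 : (0:ℝ) < d^2 := by positivity
  have hd3 : (0:ℝ) < d^3 := by positivity
  have hd4 : (0:ℝ) < d^4 := by positivity
  have hT1 : 2/5*d ≤ T := by
    rw [hTdef]; nlinarith [mul_pos hd0 hd0, mul_pos (mul_pos hd0 hd0) hd0]
  have hT2 : T ≤ 3/4*d := by
    rw [hTdef]; nlinarith [mul_pos hd0 hd0, mul_pos (mul_pos hd0 hd0) hd0]
  have hT0 : (0:ℝ) ≤ T := le_trans (by positivity) hT1
  have hs14 : s ≤ 1/4 := by linarith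
  have hT14 : T ≤ 1/4 := by linarith
  obtain ⟨G, hGdef⟩ : ∃ G : ℝ, G = 80*(T^3+T^2*s+T*s^2+s^3) + 144*(T^4+T^3*s+T^2*s^2+T*s^3+s^4)
      + 96*(T^5+T^4*s+T^3*s^2+T^2*s^3+T*s^4+s^5)
      - d^4*(25 + 30*(T+s) - 20*(T^2+T*s+s^2) - 40*(T^3+T^2*s+T*s^2+s^3)) := ⟨_, rfl⟩
  have hid : T^4*(80+144*T+96*T^2) - d^4*(5+25*T+30*T^2-20*T^3-40*T^4) = (T - s) * G := by
    rw [hGdef]; linear_combination hF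
  -- lower bound on G
  have c1 : 8/125*d^3 ≤ T^3 := by
    calc 8/125*d^3 = (2/5*d)^3 := by ring
      _ ≤ T^3 := pow_le_pow_left₀ (by positivity) hT1 3
  have c2 : 8/125*d^3 ≤ T^2*s := by
    calc 8/125*d^3 = (2/5*d)^2*(2/5*d) := by ring
      _ ≤ T^2*s := mul_le_mul (pow_le_pow_left₀ (by positivity) hT1 2) hlb (by positivity) (by positivity)
  have c3 : 8/125*d^3 ≤ T*s^2 := by
    calc 8/125*d^3 = (2/5*d)*(2/5*d)^2 := by ring
      _ ≤ T*s^2 := mul_le_mul hT1 (pow_le_pow_left₀ (by positivity) hlb 2) (by positivity) hT0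
  have c4 : 8/125*d^3 ≤ s^3 := by
    calc 8/125*d^3 = (2/5*d)^3 := by ring
      _ ≤ s^3 := pow_le_pow_left₀ (by positivity) hlb 3
  have p1 : (0:ℝ) ≤ T^4 := by positivity
  have p2 : (0:ℝ) ≤ T^3*s := mul_nonneg (pow_nonneg hT0 3) hs0.le
  have p3 : (0:ℝ) ≤ T^2*s^2 := mul_nonneg (pow_nonneg hT0 2) (by positivity)
  have p4 : (0:ℝ) ≤ T*s^3 := mul_nonneg hT0 (by positivity)
  have p5 : (0:ℝ) ≤ s^4 := by positivity
  have q1 : (0:ℝ) ≤ T^5 := pow_nonneg hT0 5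
  have q2 : (0:ℝ) ≤ T^4*s := mul_nonneg (pow_nonneg hT0 4) hs0.le
  have q3 : (0:ℝ) ≤ T^3*s^2 := mul_nonneg (pow_nonneg hT0 3) (by positivity)
  have q4 : (0:ℝ) ≤ T^2*s^3 := mul_nonneg (pow_nonneg hT0 2) (by positivity)
  have q5 : (0:ℝ) ≤ T*s^4 := mul_nonneg hT0 (by positivity)
  have q6 : (0:ℝ) ≤ s^5 := by positivity
  have hB : 25 + 30*(T+s) - 20*(T^2+T*s+s^2) - 40*(T^3+T^2*s+T*s^2+s^3) ≤ 40 := by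
    have b1 : (0:ℝ) ≤ T^2 := by positivity
    have b2 : (0:ℝ) ≤ T*s := mul_nonneg hT0 hs0.le
    have b3 : (0:ℝ) ≤ s^2 := by positivity
    have b4 : (0:ℝ) ≤ T^3 := pow_nonneg hT0 3
    have b5 : (0:ℝ) ≤ T^2*s := mul_nonneg (pow_nonneg hT0 2) hs0.le
    have b6 : (0:ℝ) ≤ T*s^2 := mul_nonneg hT0 (by positivity)
    have b7 : (0:ℝ) ≤ s^3 := by positivity
    linarith
  have hBd : d^4*(25 + 30*(T+s) - 20*(T^2+T*s+s^2) - 40*(T^3+T^2*s+T*s^2+s^3)) ≤ 40/3*d^3 := by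
    have h1 : d^4*(25 + 30*(T+s) - 20*(T^2+T*s+s^2) - 40*(T^3+T^2*s+T*s^2+s^3)) ≤ d^4*40 :=
      mul_le_mul_of_nonneg_left hB hd4.le
    nlinarith [hd3]
  have hGlb : 7*d^3 ≤ G := by
    rw [hGdef]
    linarith [c1, c2, c3, c4, p1, p2, p3, p4, p5, q1, q2, q3, q4, q5, q6, hBd]
  -- residual bound
  have hres : |T^4*(80+144*T+96*T^2) - d^4*(5+25*T+30*T^2-20*T^3-40*T^4)| ≤ 2*d^8 := by
    have hfac : T^4*(80+144*T+96*T^2) - d^4*(5+25*T+30*T^2-20*T^3-40*T^4)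
        = d^8 * ((-271/500 : ℝ) - (711/250) * d^1 - (3039/800) * d^2 - (307903/200000) * d^3 + (7155429/5000000) * d^4 + (19565727/10000000) * d^5 + (107594861/200000000) * d^6 - (7102563/15625000) * d^7 - (76534854019/200000000000) * d^8 - (10341507223/400000000000) * d^9 + (161228183267/2000000000000) * d^10 + (555259132889/20000000000000) * d^11 - (12022504673959/2000000000000000) * d^12 - (5067934646559/1000000000000000) * d^13 - (1640954524113/5000000000000000) * d^14 + (16014278822913/50000000000000000) * d^15 + (145653678817923/2000000000000000000) * d^16) := by
      rw [hTdef]; ring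
    rw [hfac, abs_mul, abs_of_nonneg (by positivity : (0:ℝ) ≤ d^8)]
    have hR := R_bound d hd0 hd
    have h8 : (0:ℝ) ≤ d^8 := by positivity
    have := mul_le_mul_of_nonneg_left hR h8
    linarith
  have hGpos : (0:ℝ) < G := lt_of_lt_of_le (by have := pow_pos hd0 3; linarith) hGlb
  have h1 : |T - s| * G ≤ 2*d^8 := by
    calc |T - s| * G = |T - s| * |G| := by rw [abs_of_nonneg hGpos.le]
      _ = |(T - s) * G| := (abs_mul _ _).symm
      _ = |T^4*(80+144*T+96*T^2) - d^4*(5+25*T+30*T^2-20*T^3-40*T^4)| := by rw [hid]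
      _ ≤ 2*d^8 := hres
  have h2 : |T - s| * (7*d^3) ≤ 2*d^8 :=
    le_trans (mul_le_mul_of_nonneg_left hGlb (abs_nonneg _)) h1
  rw [abs_sub_comm]
  have hpos : (0:ℝ) < 7*d^3 := by have := pow_pos hd0 3; linarith
  rw [← mul_le_mul_iff_of_pos_right hpos]
  have h8 : (0:ℝ) ≤ d^8 := by positivity
  calc |T - s| * (7*d^3) ≤ 2*d^8 := h2
    _ ≤ 7*d^8 := by linarith
    _ = d^5 * (7*d^3) := by ring
/-- Puiseux expansion of the double critical point near the traffic jam: the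
root `𝔴°(ε) ∈ (0, 1/2)` of the perturbed sixth-degree polynomial satisfies
`𝔴°(ε) = 1/2 − (1/2)ε^{1/4} − (1/5)ε^{1/2} + (7/100)ε^{3/4} + (191/2000)ε + O(ε^{5/4})`
as `ε → 0⁺`. -/
theorem double_critical_point_expansion
    (ε₀ : ℝ) (hε₀ : 0 < ε₀) (w : ℝ → ℝ)
    (hroot : ∀ ε : ℝ, 0 < ε → ε < ε₀ →
      w ε ∈ Set.Ioo (0:ℝ) (1/2) ∧
      -11 + 20 * ε + (103 - 20 * ε) * w ε - 30 * (13 + 2 * ε) * (w ε) ^ 2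
        + 20 * (38 + 5 * ε) * (w ε) ^ 3 - 40 * (20 + ε) * (w ε) ^ 4
        + 432 * (w ε) ^ 5 - 96 * (w ε) ^ 6 = 0) :
    ∃ C > 0, ∃ ε₁ > 0, ∀ ε : ℝ, 0 < ε → ε < ε₁ →
      |w ε - (1/2 - (1/2) * ε ^ ((1:ℝ)/4) - (1/5) * ε ^ ((1:ℝ)/2)
        + (7/100) * ε ^ ((3:ℝ)/4) + (191/2000) * ε)| ≤ C * ε ^ ((5:ℝ)/4) := by
  refine ⟨1, one_pos, min ε₀ (1/81), lt_min hε₀ (by norm_num), fun ε hε hε₁ => ?_⟩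
  obtain ⟨hmem, heq⟩ := hroot ε hε (lt_of_lt_of_le hε₁ (min_le_left _ _))
  obtain ⟨hw0, hw1⟩ := hmem
  have hε81 : ε < 1/81 := lt_of_lt_of_le hε₁ (min_le_right _ _)
  set δ : ℝ := ε ^ ((1:ℝ)/4) with hδdef
  have hδ0 : 0 < δ := Real.rpow_pos_of_pos hε _
  have hδ4 : δ^4 = ε := by
    rw [hδdef, ← Real.rpow_natCast (ε ^ ((1:ℝ)/4)) 4, ← Real.rpow_mul hε.le]
    norm_num
  have h12 : ε ^ ((1:ℝ)/2) = δ^2 := by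
    rw [hδdef, ← Real.rpow_natCast (ε ^ ((1:ℝ)/4)) 2, ← Real.rpow_mul hε.le]
    norm_num
  have h34 : ε ^ ((3:ℝ)/4) = δ^3 := by
    rw [hδdef, ← Real.rpow_natCast (ε ^ ((1:ℝ)/4)) 3, ← Real.rpow_mul hε.le]
    norm_num
  have h54 : ε ^ ((5:ℝ)/4) = δ^5 := by
    rw [hδdef, ← Real.rpow_natCast (ε ^ ((1:ℝ)/4)) 5, ← Real.rpow_mul hε.le]
    norm_num
  have hδle : δ ≤ 1/3 := by
    by_contra hcon
    push_neg at hcon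
    have : (1/3:ℝ)^4 < δ^4 := pow_lt_pow_left₀ hcon (by norm_num) (by norm_num)
    rw [hδ4] at this
    norm_num at this
    linarith
  obtain ⟨s, hsdef⟩ : ∃ s : ℝ, s = 1/2 - w ε := ⟨_, rfl⟩
  have hw : w ε = 1/2 - s := by rw [hsdef]; ring
  have hs0 : 0 < s := by rw [hsdef]; linarith
  have hs1 : s < 1/2 := by rw [hsdef]; linarith
  rw [hw, ← hδ4] at heq
  have hF : s^4*(80+144*s+96*s^2) = δ^4*(5+25*s+30*s^2-20*s^3-40*s^4) := by
    linear_combination -heq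
  have key := key_bound δ s hδ0 hδle hs0 hs1 hF
  rw [hw, h12, h34, h54, ← hδ4]
  have hrw : (1/2 - s) - (1/2 - 1/2*δ - 1/5*δ^2 + 7/100*δ^3 + 191/2000*δ^4)
      = -(s - (δ/2 + δ^2/5 - 7*δ^3/100 - 191*δ^4/2000)) := by ring
  calc |1/2 - s - (1/2 - 1/2 * δ - 1/5 * δ^2 + 7/100 * δ^3 + 191/2000 * δ^4)|
      = |s - (δ/2 + δ^2/5 - 7*δ^3/100 - 191*δ^4/2000)| := by rw [hrw, abs_neg]
    _ ≤ δ^5 := key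
    _ = 1 * δ^5 := (one_mul _).symm
end
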